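/- For the action of Aff₀(ℝ) × A on SL(2,ℝ) by (g, Aₜ)·x = g x Aₜ⁻¹: two points p, p' ∈ SL(2,ℝ) with p₂₁p₂₂ ≠ 0 and p'₂₁p'₂₂ ≠ 0 lie in the same orbit if and only if p₂₁p'₂₁ > 0 and p₂₂p'₂₂ > 0; consequently the set {x ∈ SL(2,ℝ) : x₂₁x₂₂ ≠ 0} is a union of exactly four orbits, each open in SL(2,ℝ). -/

import Mathlib

open Matrix

noncomputable section

local notation "M2" => Matrix (Fin 2) (Fin 2) ℝ
local notation "SL2" => Matrix.SpecialLinearGroup (Fin 2) ℝ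

instance : TopologicalSpace SL2 :=
  inferInstanceAs (TopologicalSpace {A : M2 // A.det = 1})

/-- Aₜ = diag(eᵗ, e⁻ᵗ) -/
def Am (t : ℝ) : M2 := !![Real.exp t, 0; 0, Real.exp (-t)]
/-- F_{t,s} = diag(eᵗ, e⁻ᵗ) + sE₁₂ -/
def Fm (t s : ℝ) : M2 := !![Real.exp t, s; 0, Real.exp (-t)]

/-- The orbit of `x` under the action of `Aff₀(ℝ) × A` on SL(2,ℝ),
`(F_{t,s}, A_u)·x = F_{t,s} x A_u⁻¹`. -/
def orbitFA (x : SL2) : Set SL2 :=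
  {y | ∃ t s u : ℝ, Fm t s * (x : M2) * (Am u)⁻¹ = (y : M2)}

lemma Am_inv (u : ℝ) : (Am u)⁻¹ = Am (-u) := by
  apply Matrix.inv_eq_right_inv
  ext i j
  fin_cases i <;> fin_cases j <;>
    simp [Am, Matrix.mul_fin_two, ← Real.exp_add]

lemma key_prod (t s u : ℝ) (x : M2) :
    Fm t s * x * (Am u)⁻¹ =
      !![(Real.exp t * x 0 0 + s * x 1 0) * Real.exp (-u),
         (Real.exp t * x 0 1 + s * x 1 1) * Real.exp u;
         Real.exp (-t) * x 1 0 * Real.exp (-u),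
         Real.exp (-t) * x 1 1 * Real.exp u] := by
  rw [Am_inv, Matrix.eta_fin_two x]
  ext i j
  fin_cases i <;> fin_cases j <;>
    simp [Am, Fm, Matrix.mul_fin_two]

lemma orbit_entries {x y : SL2} (h : y ∈ orbitFA x) :
    ∃ c d : ℝ, 0 < c ∧ 0 < d ∧ (y : M2) 1 0 = c * (x : M2) 1 0 ∧
      (y : M2) 1 1 = d * (x : M2) 1 1 := by
  obtain ⟨t, s, u, h⟩ := h
  rw [key_prod] at h
  refine ⟨Real.exp (-t) * Real.exp (-u), Real.exp (-t) * Real.exp u,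
    by positivity, by positivity, ?_, ?_⟩
  · rw [← h]; simp; ring
  · rw [← h]; simp; ring

lemma mem_orbit_of {x y : SL2} (hx : (x : M2) 1 0 * (x : M2) 1 1 ≠ 0)
    (h1 : 0 < (x : M2) 1 0 * (y : M2) 1 0)
    (h2 : 0 < (x : M2) 1 1 * (y : M2) 1 1) :
    y ∈ orbitFA x := by
  set p00 := (x : M2) 0 0; set p01 := (x : M2) 0 1
  set p10 := (x : M2) 1 0; set p11 := (x : M2) 1 1
  set q00 := (y : M2) 0 0; set q01 := (y : M2) 0 1
  set q10 := (y : M2) 1 0; set q11 := (y : M2) 1 1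
  have hp10 : p10 ≠ 0 := fun h => hx (by rw [h, zero_mul])
  have hp11 : p11 ≠ 0 := fun h => hx (by rw [h, mul_zero])
  have hc : 0 < q10 / p10 := by
    rcases hp10.lt_or_gt with h | h
    · exact div_pos_of_neg_of_neg (by nlinarith) h
    · exact div_pos (by nlinarith) h
  have hd : 0 < q11 / p11 := by
    rcases hp11.lt_or_gt with h | h
    · exact div_pos_of_neg_of_neg (by nlinarith) h
    · exact div_pos (by nlinarith) h
  set t : ℝ := -(Real.log (q10 / p10) + Real.log (q11 / p11)) / 2 with ht
  set u : ℝ := (Real.log (q11 / p11) - Real.log (q10 / p10)) / 2 with hu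
  set T := Real.exp t; set T' := Real.exp (-t)
  set U := Real.exp u; set U' := Real.exp (-u)
  have e1 : T' * U' = q10 / p10 := by
    rw [show T' * U' = Real.exp (-t + -u) from (Real.exp_add _ _).symm,
      show -t + -u = Real.log (q10 / p10) by rw [ht, hu]; ring,
      Real.exp_log hc]
  have e2 : T' * U = q11 / p11 := by
    rw [show T' * U = Real.exp (-t + u) from (Real.exp_add _ _).symm,
      show -t + u = Real.log (q11 / p11) by rw [ht, hu]; ring,
      Real.exp_log hd]
  have e1' : T' * U' * p10 = q10 := by rw [e1]; field_simp
  have e2' : T' * U * p11 = q11 := by rw [e2]; field_simp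
  have hTT' : T * T' = 1 := by
    rw [show T * T' = Real.exp (t + -t) from (Real.exp_add _ _).symm]; simp
  have hUU' : U * U' = 1 := by
    rw [show U * U' = Real.exp (u + -u) from (Real.exp_add _ _).symm]; simp
  set s : ℝ := (q00 * U - T * p00) / p10 with hs0
  have hs : s * p10 = q00 * U - T * p00 := by rw [hs0]; field_simp
  have detp : p00 * p11 - p01 * p10 = 1 := by
    have := x.property
    rwa [Matrix.det_fin_two] at this
  have detq : q00 * q11 - q01 * q10 = 1 := by
    have := y.property
    rwa [Matrix.det_fin_two] at this
  refine ⟨t, s, u, ?_⟩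
  rw [key_prod]
  have g01 : (T * p01 + s * p11) * U = q01 := by
    have key : ((T * p01 + s * p11) * U - q01) * (p10 * (T' * U')) = 0 := by
      linear_combination (p11*U*T'*U') * hs - q01 * e1' + (q00*U*U') * e2' +
        ((p01*p10 - p00*p11)*U*U') * hTT' +
        (p01*p10 + q00*q11 - p00*p11) * hUU' - detp + detq
    have hT' : (0:ℝ) < T' := Real.exp_pos _
    have hU' : (0:ℝ) < U' := Real.exp_pos _
    have : p10 * (T' * U') ≠ 0 := by positivity
    have := (mul_eq_zero.1 key).resolve_right this
    linarith [this]
  ext i j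
  fin_cases i <;> fin_cases j <;> simp
  · linear_combination U' * hs + q00 * hUU'
  · exact g01
  · linear_combination e1'
  · linear_combination e2'

/-- For the action of `Aff₀(ℝ) × A` on SL(2,ℝ): points `p, p'` with
`p₂₁p₂₂ ≠ 0 ≠ p'₂₁p'₂₂` lie in the same orbit iff `p₂₁p'₂₁ > 0` and `p₂₂p'₂₂ > 0`;
consequently `{x : x₂₁x₂₂ ≠ 0}` is the union of exactly four orbits, each open. -/
theorem AffA_open_orbits :
    (∀ p p' : SL2, (p : M2) 1 0 * (p : M2) 1 1 ≠ 0 → (p' : M2) 1 0 * (p' : M2) 1 1 ≠ 0 →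
      (p' ∈ orbitFA p ↔
        0 < (p : M2) 1 0 * (p' : M2) 1 0 ∧ 0 < (p : M2) 1 1 * (p' : M2) 1 1)) ∧
    ∃ q : Fin 4 → SL2,
      (⋃ i, orbitFA (q i)) = {x : SL2 | (x : M2) 1 0 * (x : M2) 1 1 ≠ 0} ∧
      (∀ i j, i ≠ j → Disjoint (orbitFA (q i)) (orbitFA (q j))) ∧
      ∀ i, IsOpen (orbitFA (q i)) := by
  constructor
  · intro p p' hp hp'
    constructor
    · intro h
      obtain ⟨c, d, hc, hd, h1, h2⟩ := orbit_entries h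
      have h10 : (p : M2) 1 0 ≠ 0 := fun h => hp (by rw [h, zero_mul])
      have h11 : (p : M2) 1 1 ≠ 0 := fun h => hp (by rw [h, mul_zero])
      constructor
      · rw [h1]; nlinarith [mul_self_pos.2 h10]
      · rw [h2]; nlinarith [mul_self_pos.2 h11]
    · intro ⟨h1, h2⟩
      exact mem_orbit_of hp h1 h2
  · have horb : ∀ z : SL2, (z : M2) 1 0 ≠ 0 → (z : M2) 1 1 ≠ 0 →
        orbitFA z = {x : SL2 | 0 < (z : M2) 1 0 * (x : M2) 1 0 ∧
          0 < (z : M2) 1 1 * (x : M2) 1 1} := by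
      intro z h10 h11
      ext y
      simp only [Set.mem_setOf_eq]
      constructor
      · intro h
        obtain ⟨c, d, hc, hd, h1, h2⟩ := orbit_entries h
        exact ⟨by rw [h1]; nlinarith [mul_self_pos.2 h10],
          by rw [h2]; nlinarith [mul_self_pos.2 h11]⟩
      · intro ⟨h1, h2⟩
        exact mem_orbit_of (mul_ne_zero h10 h11) h1 h2
    set q : Fin 4 → SL2 :=
      ![⟨!![0, -1; 1, 1], by norm_num [Matrix.det_fin_two]⟩,
        ⟨!![0, -1; 1, -1], by norm_num [Matrix.det_fin_two]⟩,
        ⟨!![0, 1; -1, 1], by norm_num [Matrix.det_fin_two]⟩,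
        ⟨!![0, 1; -1, -1], by norm_num [Matrix.det_fin_two]⟩] with hqdef
    have h10ne : ∀ i, (q i : M2) 1 0 ≠ 0 := by
      intro i; fin_cases i <;> simp [q]
    have h11ne : ∀ i, (q i : M2) 1 1 ≠ 0 := by
      intro i; fin_cases i <;> simp [q]
    refine ⟨q, ?_, ?_, ?_⟩
    · ext x
      simp only [Set.mem_iUnion, Set.mem_setOf_eq]
      constructor
      · rintro ⟨i, hi⟩
        rw [horb _ (h10ne i) (h11ne i)] at hi
        obtain ⟨h1, h2⟩ := hi
        have hx10 : (x : M2) 1 0 ≠ 0 := by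
          intro h; rw [h, mul_zero] at h1; exact lt_irrefl 0 h1
        have hx11 : (x : M2) 1 1 ≠ 0 := by
          intro h; rw [h, mul_zero] at h2; exact lt_irrefl 0 h2
        exact mul_ne_zero hx10 hx11
      · intro hx
        have hx10 : (x : M2) 1 0 ≠ 0 := fun h => hx (by rw [h, zero_mul])
        have hx11 : (x : M2) 1 1 ≠ 0 := fun h => hx (by rw [h, mul_zero])
        rcases hx10.lt_or_gt with h10 | h10 <;> rcases hx11.lt_or_gt with h11 | h11
        · refine ⟨3, ?_⟩
          rw [horb _ (h10ne 3) (h11ne 3)]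
          constructor <;> simp [q] <;> linarith
        · refine ⟨2, ?_⟩
          rw [horb _ (h10ne 2) (h11ne 2)]
          constructor <;> simp [q] <;> linarith
        · refine ⟨1, ?_⟩
          rw [horb _ (h10ne 1) (h11ne 1)]
          constructor <;> simp [q] <;> linarith
        · refine ⟨0, ?_⟩
          rw [horb _ (h10ne 0) (h11ne 0)]
          constructor <;> simp [q] <;> linarith
    · intro i j hij
      rw [Set.disjoint_left]
      intro y hyi hyj
      rw [horb _ (h10ne i) (h11ne i)] at hyi
      rw [horb _ (h10ne j) (h11ne j)] at hyj
      obtain ⟨a1, a2⟩ := hyi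
      obtain ⟨b1, b2⟩ := hyj
      have hA : ∀ k : Fin 4, (q k : M2) 1 0 = ![(1:ℝ), 1, -1, -1] k := by
        intro k; fin_cases k <;> simp [q]
      have hB : ∀ k : Fin 4, (q k : M2) 1 1 = ![(1:ℝ), -1, 1, -1] k := by
        intro k; fin_cases k <;> simp [q]
      rw [hA i] at a1
      rw [hA j] at b1
      rw [hB i] at a2
      rw [hB j] at b2
      clear horb hA hB h10ne h11ne
      fin_cases i <;> fin_cases j <;>
        simp at hij <;> norm_num at a1 a2 b1 b2 ⊢ <;> linarith
    · intro i
      rw [horb _ (h10ne i) (h11ne i)]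
      have c1 : Continuous fun x : SL2 => (x : M2) 1 0 :=
        continuous_subtype_val.matrix_elem 1 0
      have c2 : Continuous fun x : SL2 => (x : M2) 1 1 :=
        continuous_subtype_val.matrix_elem 1 1
      exact (isOpen_lt continuous_const (continuous_const.mul c1)).and
        (isOpen_lt continuous_const (continuous_const.mul c2))
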